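/- For every minimal loop σ of a sound deterministic negotiation, the set of atoms occurring in σ induces a strongly connected subgraph of the graph of the negotiation. -/

import Mathlib

universe u v w x

/-- A negotiation over agents `A`, atom names `ν`, outcome names `ρ`, and
internal state spaces `Q a` for each agent `a`. -/
structure Negotiation (A : Type u) (ν : Type v) (ρ : Type w) (Q : A → Type x) where
  atoms : Finset ν
  init : ν
  final : ν
  parties : ν → Finset A
  outs : ν → Finset ρ
  trans : ν → A → ρ → Finset ν
  delta : ν → ρ → (∀ a, Q a) → (∀ a, Q a) → Prop
  init_mem : init ∈ atoms
  final_mem : final ∈ atoms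
  parties_nonempty : ∀ n ∈ atoms, (parties n).Nonempty
  outs_nonempty : ∀ n ∈ atoms, (outs n).Nonempty
  init_all : ∀ a, a ∈ parties init
  final_all : ∀ a, a ∈ parties final
  trans_sub : ∀ n ∈ atoms, ∀ a ∈ parties n, ∀ r ∈ outs n, trans n a r ⊆ atoms
  trans_empty_iff : ∀ n ∈ atoms, ∀ a ∈ parties n, ∀ r ∈ outs n, (trans n a r = ∅ ↔ n = final)
  delta_total : ∀ n ∈ atoms, ∀ r ∈ outs n, ∀ q, ∃ q', delta n r q q'
  delta_frame : ∀ n ∈ atoms, ∀ r ∈ outs n, ∀ q q', delta n r q q' → ∀ a ∉ parties n, q' a = q a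

namespace Negotiation

variable {A : Type u} {ν : Type v} {ρ : Type w} {Q : A → Type x}
variable [DecidableEq A]

/-- The initial marking. -/
def initM (N : Negotiation A ν ρ Q) : A → Finset ν := fun _ => {N.init}

/-- The final marking. -/
def finalM (_N : Negotiation A ν ρ Q) : A → Finset ν := fun _ => ∅

/-- A marking enables an atom if every party is ready to engage in it. -/
def Enables (N : Negotiation A ν ρ Q) (x : A → Finset ν) (n : ν) : Prop :=
  n ∈ N.atoms ∧ ∀ a ∈ N.parties n, n ∈ x a

/-- The small step `x →(n,r) x'`. -/
def Step (N : Negotiation A ν ρ Q) (x : A → Finset ν) (n : ν) (r : ρ)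
    (x' : A → Finset ν) : Prop :=
  N.Enables x n ∧ r ∈ N.outs n ∧
    ∀ a, x' a = if a ∈ N.parties n then N.trans n a r else x a

/-- Occurrence sequences: `Occ N x σ x'` means `x →σ x'`. -/
inductive Occ (N : Negotiation A ν ρ Q) : (A → Finset ν) → List (ν × ρ) → (A → Finset ν) → Prop
  | nil (x : A → Finset ν) : Occ N x [] x
  | cons {x : A → Finset ν} {n : ν} {r : ρ} {x' : A → Finset ν} {l : List (ν × ρ)}
      {x'' : A → Finset ν} :
      N.Step x n r x' → Occ N x' l x'' → Occ N x ((n, r) :: l) x''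

/-- A marking is reachable if some occurrence sequence leads to it from the initial marking. -/
def Reachable (N : Negotiation A ν ρ Q) (x : A → Finset ν) : Prop :=
  ∃ σ, Occ N N.initM σ x

/-- Soundness: every atom can become enabled, and every initial occurrence sequence can be
extended to a large step. -/
def Sound (N : Negotiation A ν ρ Q) : Prop :=
  (∀ n ∈ N.atoms, ∃ x, N.Reachable x ∧ N.Enables x n) ∧
  (∀ σ x, Occ N N.initM σ x → ∃ τ, Occ N x τ N.finalM)

/-- The edge relation of the graph of a negotiation. -/
def Edge (N : Negotiation A ν ρ Q) (n n' : ν) : Prop :=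
  n ∈ N.atoms ∧ ∃ a ∈ N.parties n, ∃ r ∈ N.outs n, n' ∈ N.trans n a r

/-- A negotiation is cyclic if its graph has a cycle. -/
def Cyclic (N : Negotiation A ν ρ Q) : Prop :=
  ∃ n, Relation.TransGen N.Edge n n

/-- A negotiation is acyclic if its graph has no cycle. -/
def Acyclic (N : Negotiation A ν ρ Q) : Prop := ¬ N.Cyclic

/-- A negotiation is deterministic if every transition value is a singleton
(except at the final atom). -/
def Deterministic (N : Negotiation A ν ρ Q) : Prop :=
  ∀ n ∈ N.atoms, n ≠ N.final → ∀ a ∈ N.parties n, ∀ r ∈ N.outs n, ∃ m, N.trans n a r = {m}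

/-- A loop: a nonempty occurrence sequence from a reachable marking back to itself. -/
def IsLoop (N : Negotiation A ν ρ Q) (σ : List (ν × ρ)) : Prop :=
  σ ≠ [] ∧ ∃ x, N.Reachable x ∧ Occ N x σ x

/-- The set of atoms occurring in an occurrence sequence. -/
def atomsOf [DecidableEq ν] (σ : List (ν × ρ)) : Finset ν := (σ.map Prod.fst).toFinset

/-- A minimal loop: no loop has a set of atoms that is a proper subset of its set of atoms. -/
def IsMinimalLoop [DecidableEq ν] (N : Negotiation A ν ρ Q) (σ : List (ν × ρ)) : Prop :=
  N.IsLoop σ ∧ ∀ σ', N.IsLoop σ' → ¬ atomsOf σ' ⊂ atomsOf σ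

/-- `s` is a synchronizer of the loop `σ`. -/
def Synchronizes [DecidableEq ν] (N : Negotiation A ν ρ Q) (s : ν) (σ : List (ν × ρ)) : Prop :=
  N.IsLoop σ ∧ s ∈ atomsOf σ ∧ ∀ p ∈ σ, N.parties p.1 ⊆ N.parties s

/-- A loop is synchronized if it has a synchronizer. -/
def Synchronized [DecidableEq ν] (N : Negotiation A ν ρ Q) (σ : List (ν × ρ)) : Prop :=
  ∃ s, N.Synchronizes s σ

/-- The set of synchronizers of a negotiation. -/
def Synchronizers [DecidableEq ν] (N : Negotiation A ν ρ Q) : Set ν :=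
  {s | ∃ σ, N.Synchronizes s σ}

/-- The outcome `(n,r)` unconditionally enables the atom `n'`. -/
def UncondEnables (N : Negotiation A ν ρ Q) (n : ν) (r : ρ) (n' : ν) : Prop :=
  N.parties n' ⊆ N.parties n ∧ ∀ a ∈ N.parties n', N.trans n a r = {n'}

/-- The state transformer of an occurrence sequence: the relational composition of the
transformers of its outcomes. -/
def seqDelta (N : Negotiation A ν ρ Q) : List (ν × ρ) → ((∀ a, Q a) → (∀ a, Q a) → Prop)
  | [] => Eq
  | p :: l => Relation.Comp (N.delta p.1 p.2) (N.seqDelta l)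

/-- The summary transformer `⟨N, r⟩` associated with a final outcome `r`. -/
def SummaryT (N : Negotiation A ν ρ Q) (r : ρ) : (∀ a, Q a) → (∀ a, Q a) → Prop :=
  fun q q' => ∃ σ, Occ N N.initM σ N.finalM ∧ σ.getLast? = some (N.final, r) ∧
    N.seqDelta σ q q'

/-- Equivalence of negotiations over the same agents. -/
def Equivalent (N₁ N₂ : Negotiation A ν ρ Q) : Prop :=
  (¬ N₁.Sound ∧ ¬ N₂.Sound) ∨
  (N₁.Sound ∧ N₂.Sound ∧ N₁.outs N₁.final = N₂.outs N₂.final ∧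
    ∀ r ∈ N₁.outs N₁.final, N₁.SummaryT r = N₂.SummaryT r)

/-- Total number of outcomes of all atoms, `|Out(N)|`. -/
def OutCard (N : Negotiation A ν ρ Q) : ℕ := ∑ n ∈ N.atoms, (N.outs n).card

/-- The target of an outcome `(n,r)`: the partial function assigning to each party its set of
next atoms. -/
def target (N : Negotiation A ν ρ Q) (n : ν) (r : ρ) : A → Option (Finset ν) :=
  fun a => if a ∈ N.parties n then some (N.trans n a r) else none

/-- `Ta(N)`: the set of targets of all outcomes of `N`. -/
def Targets (N : Negotiation A ν ρ Q) : Set (A → Option (Finset ν)) :=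
  {f | ∃ n ∈ N.atoms, ∃ r ∈ N.outs n, f = N.target n r}

section Rules

variable [DecidableEq ν] [DecidableEq ρ]

/-- The merge rule applied at atom `n`, merging outcomes `r₁, r₂` into the fresh outcome `rf`. -/
def MergeAt (n : ν) (r₁ r₂ rf : ρ) (N₁ N₂ : Negotiation A ν ρ Q) : Prop :=
  n ∈ N₁.atoms ∧ r₁ ∈ N₁.outs n ∧ r₂ ∈ N₁.outs n ∧ r₁ ≠ r₂ ∧
  (∀ a ∈ N₁.parties n, N₁.trans n a r₁ = N₁.trans n a r₂) ∧
  rf ∉ N₁.outs n ∧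
  N₂.atoms = N₁.atoms ∧ N₂.init = N₁.init ∧ N₂.final = N₁.final ∧
  N₂.parties = N₁.parties ∧
  N₂.outs n = insert rf (((N₁.outs n).erase r₁).erase r₂) ∧
  (∀ m, m ≠ n → N₂.outs m = N₁.outs m) ∧
  (∀ a, N₂.trans n a rf = N₁.trans n a r₁) ∧
  (∀ r ∈ ((N₁.outs n).erase r₁).erase r₂, ∀ a, N₂.trans n a r = N₁.trans n a r) ∧
  (∀ m, m ≠ n → N₂.trans m = N₁.trans m) ∧
  (N₂.delta n rf = fun q q' => N₁.delta n r₁ q q' ∨ N₁.delta n r₂ q q') ∧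
  (∀ r ∈ ((N₁.outs n).erase r₁).erase r₂, N₂.delta n r = N₁.delta n r) ∧
  (∀ m, m ≠ n → N₂.delta m = N₁.delta m)

/-- The condition "`n'` appears in no value of the transition function after steps (1)-(3)
of the shortcut rule applied to `(n, r)` and `n'`". -/
def ShortcutRemCond (N₁ : Negotiation A ν ρ Q) (n n' : ν) (r : ρ) : Prop :=
  (∀ m ∈ N₁.atoms, ∀ a ∈ N₁.parties m, ∀ r'' ∈ N₁.outs m,
      (m = n → r'' ≠ r) → n' ∉ N₁.trans m a r'') ∧
  (∀ a ∈ N₁.parties n, a ∉ N₁.parties n' → n' ∉ N₁.trans n a r) ∧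
  (∀ r' ∈ N₁.outs n', ∀ a ∈ N₁.parties n', n' ∉ N₁.trans n' a r')

/-- The shortcut rule applied at `(n,r)` shortcutting the unconditionally enabled atom `n'`,
with fresh outcome names given by `fr`. -/
def ShortcutAt (n n' : ν) (r : ρ) (fr : ρ → ρ) (N₁ N₂ : Negotiation A ν ρ Q) : Prop :=
  N₁.Deterministic ∧
  n ∈ N₁.atoms ∧ n' ∈ N₁.atoms ∧ n ≠ n' ∧ r ∈ N₁.outs n ∧
  N₁.UncondEnables n r n' ∧
  (∀ r₁ ∈ N₁.outs n', ∀ r₂ ∈ N₁.outs n', fr r₁ = fr r₂ → r₁ = r₂) ∧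
  (∀ r' ∈ N₁.outs n', fr r' ∉ N₁.outs n) ∧
  N₂.init = N₁.init ∧ N₂.final = N₁.final ∧
  N₂.outs n = ((N₁.outs n).erase r) ∪ (N₁.outs n').image fr ∧
  (∀ m ∈ N₂.atoms, m ≠ n → N₂.outs m = N₁.outs m) ∧
  (∀ m ∈ N₂.atoms, N₂.parties m = N₁.parties m) ∧
  (∀ r' ∈ N₁.outs n', ∀ a ∈ N₁.parties n', N₂.trans n a (fr r') = N₁.trans n' a r') ∧
  (∀ r' ∈ N₁.outs n', ∀ a ∈ N₁.parties n, a ∉ N₁.parties n' →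
      N₂.trans n a (fr r') = N₁.trans n a r) ∧
  (∀ r'' ∈ (N₁.outs n).erase r, ∀ a, N₂.trans n a r'' = N₁.trans n a r'') ∧
  (∀ m ∈ N₂.atoms, m ≠ n → N₂.trans m = N₁.trans m) ∧
  (∀ r' ∈ N₁.outs n', N₂.delta n (fr r') = Relation.Comp (N₁.delta n r) (N₁.delta n' r')) ∧
  (∀ r'' ∈ (N₁.outs n).erase r, N₂.delta n r'' = N₁.delta n r'') ∧
  (∀ m ∈ N₂.atoms, m ≠ n → N₂.delta m = N₁.delta m) ∧
  (ShortcutRemCond N₁ n n' r → N₂.atoms = N₁.atoms.erase n') ∧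
  (¬ ShortcutRemCond N₁ n n' r → N₂.atoms = N₁.atoms)

/-- The iteration rule applied at the self-loop outcome `(n, r)`, with fresh outcome names
given by `fr`. -/
def IterAt (n : ν) (r : ρ) (fr : ρ → ρ) (N₁ N₂ : Negotiation A ν ρ Q) : Prop :=
  n ∈ N₁.atoms ∧ r ∈ N₁.outs n ∧
  (∀ a ∈ N₁.parties n, N₁.trans n a r = {n}) ∧
  (∀ r₁ ∈ (N₁.outs n).erase r, ∀ r₂ ∈ (N₁.outs n).erase r, fr r₁ = fr r₂ → r₁ = r₂) ∧
  N₂.atoms = N₁.atoms ∧ N₂.init = N₁.init ∧ N₂.final = N₁.final ∧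
  N₂.parties = N₁.parties ∧
  N₂.outs n = ((N₁.outs n).erase r).image fr ∧
  (∀ m, m ≠ n → N₂.outs m = N₁.outs m) ∧
  (∀ r' ∈ (N₁.outs n).erase r, ∀ a, N₂.trans n a (fr r') = N₁.trans n a r') ∧
  (∀ m, m ≠ n → N₂.trans m = N₁.trans m) ∧
  (∀ r' ∈ (N₁.outs n).erase r,
      N₂.delta n (fr r') =
        Relation.Comp (Relation.ReflTransGen (N₁.delta n r)) (N₁.delta n r')) ∧
  (∀ m, m ≠ n → N₂.delta m = N₁.delta m)

/-- The merge rule as a relation between negotiations. -/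
def MergeRule (N₁ N₂ : Negotiation A ν ρ Q) : Prop :=
  ∃ n r₁ r₂ rf, MergeAt n r₁ r₂ rf N₁ N₂

/-- The shortcut rule as a relation between negotiations. -/
def ShortcutRule (N₁ N₂ : Negotiation A ν ρ Q) : Prop :=
  ∃ n n' r fr, ShortcutAt n n' r fr N₁ N₂

/-- The iteration rule as a relation between negotiations. -/
def IterRule (N₁ N₂ : Negotiation A ν ρ Q) : Prop :=
  ∃ n r fr, IterAt n r fr N₁ N₂

/-- The guard of the merge rule is satisfied somewhere in `N₁`. -/
def MergeApplicable (N₁ : Negotiation A ν ρ Q) : Prop :=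
  ∃ n ∈ N₁.atoms, ∃ r₁ ∈ N₁.outs n, ∃ r₂ ∈ N₁.outs n, r₁ ≠ r₂ ∧
    ∀ a ∈ N₁.parties n, N₁.trans n a r₁ = N₁.trans n a r₂

end Rules

/-- A rule application, identified by its parameters. -/
inductive RuleTag (ν : Type v) (ρ : Type w) where
  | merge (n : ν) (r₁ r₂ rf : ρ)
  | shortcut (n n' : ν) (r : ρ) (fr : ρ → ρ)
  | iter (n : ν) (r : ρ) (fr : ρ → ρ)

/-- Whether a rule tag is a merge rule. -/
def RuleTag.isMerge : RuleTag ν ρ → Prop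
  | .merge _ _ _ _ => True
  | _ => False

/-- Whether a rule tag is a merge or a shortcut rule. -/
def RuleTag.isMergeOrShortcut : RuleTag ν ρ → Prop
  | .iter _ _ _ => False
  | _ => True

section Chains

variable [DecidableEq ν] [DecidableEq ρ]

/-- Applying the rule given by a tag. -/
def ApplyRule : RuleTag ν ρ → Negotiation A ν ρ Q → Negotiation A ν ρ Q → Prop
  | .merge n r₁ r₂ rf => MergeAt n r₁ r₂ rf
  | .shortcut n n' r fr => ShortcutAt n n' r fr
  | .iter n r fr => IterAt n r fr

/-- Applying a finite sequence of rules. -/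
inductive Chain : List (RuleTag ν ρ) → Negotiation A ν ρ Q → Negotiation A ν ρ Q → Prop
  | nil (N : Negotiation A ν ρ Q) : Chain [] N N
  | cons {t : RuleTag ν ρ} {L : List (RuleTag ν ρ)} {N₁ N₂ N₃ : Negotiation A ν ρ Q} :
      ApplyRule t N₁ N₂ → Chain L N₂ N₃ → Chain (t :: L) N₁ N₃

end Chains

section Fragments

variable [DecidableEq ν]

/-- The atoms of the fragment `F_s`: atoms occurring in loops synchronized by `s`. -/
def FragAtoms (N : Negotiation A ν ρ Q) (s : ν) : Set ν :=
  {n | ∃ σ, N.Synchronizes s σ ∧ n ∈ atomsOf σ}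

/-- The outcomes of an atom `n` in the fragment `F_s`. -/
def FragOuts (N : Negotiation A ν ρ Q) (s : ν) (n : ν) : Set ρ :=
  {r | ∃ σ, N.Synchronizes s σ ∧ (n, r) ∈ σ}

/-- An exit of the fragment `F_s`: an outcome of `N` whose atom belongs to `F_s`
but which is not an outcome of `F_s`. -/
def IsExit (N : Negotiation A ν ρ Q) (s : ν) (e : ν) (re : ρ) : Prop :=
  e ∈ N.FragAtoms s ∧ re ∈ N.outs e ∧ re ∉ N.FragOuts s e

/-- Characterization of the `s`-negotiation `N_s`: a negotiation over the agents `P_s`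
whose atoms are those of the fragment `F_s` together with a fresh final atom, whose initial
atom is (the restriction of) `s`, and whose transition function agrees with the one of `F_s`
except that every value equal to `s` is replaced by the fresh final atom. -/
def IsSNeg (N : Negotiation A ν ρ Q) (s : ν)
    (M : Negotiation {a : A // a ∈ N.parties s} ν ρ (fun a => Q a.1)) : Prop :=
  ∃ nf : ν, nf ∉ N.FragAtoms s ∧
    (↑M.atoms : Set ν) = insert nf (N.FragAtoms s) ∧
    M.init = s ∧ M.final = nf ∧
    (∀ n ∈ N.FragAtoms s, ∀ a : {a : A // a ∈ N.parties s},
        (a ∈ M.parties n ↔ a.1 ∈ N.parties n)) ∧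
    (∀ n ∈ N.FragAtoms s, ∀ r : ρ, (r ∈ M.outs n ↔ r ∈ N.FragOuts s n)) ∧
    (∀ n ∈ N.FragAtoms s, ∀ r ∈ M.outs n, ∀ a : {a : A // a ∈ N.parties s},
        (↑(M.trans n a r) : Set ν) = (fun t => if t = s then nf else t) '' ↑(N.trans n a.1 r)) ∧
    (∀ n ∈ N.FragAtoms s, ∀ r ∈ M.outs n, ∀ q q',
        M.delta n r q q' ↔
          ∃ qf qf' : (∀ a, Q a),
            (∀ a : {a : A // a ∈ N.parties s}, qf a.1 = q a) ∧
            (∀ a : {a : A // a ∈ N.parties s}, qf' a.1 = q' a) ∧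
            N.delta n r qf qf')

end Fragments

section Procedure

variable [DecidableEq ν] [DecidableEq ρ]

/-- An execution of the reduction procedure on `N₀`:
`Ni 1` is obtained from `N₀` by exhaustive merging; while `Ni i` is cyclic, an atom `sel i`
whose `s`-negotiation is acyclic is selected, the sequence of merge and shortcut rules that
summarizes this `s`-negotiation (except its last rule) is applied to `Ni i` (giving `Nmid i`),
the iteration rule is applied at `sel i` (giving `Ni' i`), and then the merge rule is applied
exhaustively (giving `Ni (i+1)`); finally, the resulting acyclic negotiation is summarized by
merge and shortcut rules. -/
structure RedExec (N₀ : Negotiation A ν ρ Q) where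
  steps : ℕ
  Ni : ℕ → Negotiation A ν ρ Q
  Nmid : ℕ → Negotiation A ν ρ Q
  Ni' : ℕ → Negotiation A ν ρ Q
  sel : ℕ → ν
  initSeq : List (RuleTag ν ρ)
  segSeq : ℕ → List (RuleTag ν ρ)
  mergeSeq : ℕ → List (RuleTag ν ρ)
  finalSeq : List (RuleTag ν ρ)
  Nfin : Negotiation A ν ρ Q
  h_init : Chain initSeq N₀ (Ni 1)
  h_init_merge : ∀ t ∈ initSeq, t.isMerge
  h_init_irred : ¬ (Ni 1).MergeApplicable
  h_cyc : ∀ i, 1 ≤ i → i ≤ steps → (Ni i).Cyclic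
  h_acyc : ¬ (Ni (steps + 1)).Cyclic
  h_sel_mem : ∀ i, 1 ≤ i → i ≤ steps → sel i ∈ (Ni i).atoms
  h_sel_acyc : ∀ i, 1 ≤ i → i ≤ steps →
    ∀ M : Negotiation {a : A // a ∈ (Ni i).parties (sel i)} ν ρ (fun a => Q a.1),
      (Ni i).IsSNeg (sel i) M → M.Acyclic
  h_seg : ∀ i, 1 ≤ i → i ≤ steps →
    ∃ (M M' : Negotiation {a : A // a ∈ (Ni i).parties (sel i)} ν ρ (fun a => Q a.1))
      (t : RuleTag ν ρ),
      (Ni i).IsSNeg (sel i) M ∧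
      Chain (segSeq i ++ [t]) M M' ∧ M'.atoms.card = 1 ∧
      (∀ u ∈ segSeq i ++ [t], u.isMergeOrShortcut) ∧
      Chain (segSeq i) (Ni i) (Nmid i)
  h_iter : ∀ i, 1 ≤ i → i ≤ steps → ∃ r fr, IterAt (sel i) r fr (Nmid i) (Ni' i)
  h_merge : ∀ i, 1 ≤ i → i ≤ steps →
    Chain (mergeSeq i) (Ni' i) (Ni (i + 1)) ∧ (∀ t ∈ mergeSeq i, t.isMerge) ∧
      ¬ (Ni (i + 1)).MergeApplicable
  h_final : Chain finalSeq (Ni (steps + 1)) Nfin ∧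
    (∀ t ∈ finalSeq, t.isMergeOrShortcut) ∧ Nfin.atoms.card = 1
  h_stable : ∀ i, steps + 1 ≤ i → Ni i = Ni (steps + 1)
  h_stable' : ∀ i, i < 1 ∨ steps < i → Ni' i = Ni i

/-- The total number of rule applications in an execution of the reduction procedure. -/
def RedExec.appl {N₀ : Negotiation A ν ρ Q} (E : RedExec N₀) : ℕ :=
  E.initSeq.length +
    (∑ i ∈ Finset.Icc 1 E.steps, ((E.segSeq i).length + 1 + (E.mergeSeq i).length)) +
    E.finalSeq.length

end Procedure

end Negotiation

open Negotiation

variable {A : Type} {ν : Type} {ρ : Type} {Q : A → Type}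
variable [DecidableEq A] [DecidableEq ν] [DecidableEq ρ]

section AuxLemmas

open Relation

lemma mem_atomsOf' {σ : List (ν × ρ)} {m : ν} :
    m ∈ atomsOf σ ↔ ∃ r, (m, r) ∈ σ := by
  simp only [atomsOf, List.mem_toFinset, List.mem_map]
  constructor
  · rintro ⟨⟨u, r⟩, h, rfl⟩; exact ⟨r, h⟩
  · rintro ⟨r, h⟩; exact ⟨(m, r), h, rfl⟩

lemma occ_append {N : Negotiation A ν ρ Q} {x y z : A → Finset ν} {σ τ : List (ν × ρ)}
    (h1 : N.Occ x σ y) (h2 : N.Occ y τ z) : N.Occ x (σ ++ τ) z := by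
  induction h1 with
  | nil => simpa
  | cons hs _ ih => exact .cons hs (ih h2)

lemma occ_split {N : Negotiation A ν ρ Q} {x z : A → Finset ν} :
    ∀ {σ τ : List (ν × ρ)}, N.Occ x (σ ++ τ) z → ∃ y, N.Occ x σ y ∧ N.Occ y τ z := by
  intro σ
  induction σ generalizing x with
  | nil => intro τ h; exact ⟨x, .nil x, h⟩
  | cons p l ih =>
    intro τ h
    obtain ⟨n, r⟩ := p
    cases h with
    | cons hs hrest =>
      obtain ⟨y, h1, h2⟩ := ih hrest
      exact ⟨y, .cons hs h1, h2⟩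

lemma occ_final {N : Negotiation A ν ρ Q} {τ : List (ν × ρ)} {z : A → Finset ν}
    (h : N.Occ N.finalM τ z) : τ = [] ∧ z = N.finalM := by
  cases h with
  | nil => exact ⟨rfl, rfl⟩
  | cons hs _ =>
    obtain ⟨⟨hmem, hen⟩, _, _⟩ := hs
    obtain ⟨a, ha⟩ := N.parties_nonempty _ hmem
    exact absurd (hen a ha) (by simp [Negotiation.finalM])

lemma final_not_in_loop {N : Negotiation A ν ρ Q} {x : A → Finset ν} {σ : List (ν × ρ)} {r : ρ}
    (h : N.Occ x σ x) (hmem : (N.final, r) ∈ σ) : False := by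
  obtain ⟨s, t, rfl⟩ := List.append_of_mem hmem
  obtain ⟨y, hy, hyt⟩ := occ_split h
  cases hyt with
  | @cons _ _ _ y₁ _ _ hs ht =>
    obtain ⟨⟨hmemf, _⟩, hr, hx'⟩ := hs
    have hy1 : y₁ = N.finalM := by
      funext a
      rw [hx' a, if_pos (N.final_all a),
        (N.trans_empty_iff _ hmemf a (N.final_all a) r hr).mpr rfl]
      rfl
    rw [hy1] at ht
    obtain ⟨rfl, hx⟩ := occ_final ht
    rw [hx] at h
    obtain ⟨hnil, -⟩ := occ_final h
    simp at hnil

lemma step_of_mem {N : Negotiation A ν ρ Q} {x z : A → Finset ν} {σ : List (ν × ρ)}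
    (h : N.Occ x σ z) {n : ν} {r : ρ} (hp : (n, r) ∈ σ) :
    ∃ y y', N.Step y n r y' := by
  obtain ⟨s, t, rfl⟩ := List.append_of_mem hp
  obtain ⟨y, -, hyt⟩ := occ_split h
  cases hyt with
  | cons hs _ => exact ⟨_, _, hs⟩

lemma loop_singleton_trans {N : Negotiation A ν ρ Q} (hD : N.Deterministic)
    {x : A → Finset ν} {σ : List (ν × ρ)} (h : N.Occ x σ x) {n : ν} {r : ρ}
    (hp : (n, r) ∈ σ) {a : A} (ha : a ∈ N.parties n) :
    ∃ u, N.trans n a r = {u} := by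
  obtain ⟨y, y', hs⟩ := step_of_mem h hp
  obtain ⟨⟨hmem, -⟩, hr, -⟩ := hs
  exact hD n hmem (fun hf => final_not_in_loop h (hf ▸ hp)) a ha r hr

lemma token_chain {N : Negotiation A ν ρ Q} (S : Finset ν) (st : ν) :
    ∀ {τ : List (ν × ρ)} {y z : A → Finset ν}, N.Occ y τ z →
    (∀ p ∈ τ, p.1 ∈ S ∧ ∀ b ∈ N.parties p.1, ∃ u, N.trans p.1 b p.2 = {u}) →
    ∀ (a : A) (m0 : ν), y a = {m0} →
    (m0 ∈ S → ReflTransGen (fun u v => N.Edge u v ∧ u ∈ S ∧ v ∈ S) st m0) →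
    ∀ p ∈ τ, a ∈ N.parties p.1 →
      ReflTransGen (fun u v => N.Edge u v ∧ u ∈ S ∧ v ∈ S) st p.1 := by
  intro τ y z hocc
  induction hocc with
  | nil => intro _ _ _ _ _ p hp; simp at hp
  | @cons x n r x' l x'' hs hl ih =>
    intro hτ a m0 hya hinv p hp hap
    obtain ⟨⟨hnatoms, hen⟩, hrout, hx'⟩ := hs
    have hτtail : ∀ p ∈ l, p.1 ∈ S ∧ ∀ b ∈ N.parties p.1, ∃ u, N.trans p.1 b p.2 = {u} :=
      fun p hp => hτ p (List.mem_cons_of_mem _ hp)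
    by_cases hpart : a ∈ N.parties n
    · have hn_eq : n = m0 := by
        have := hen a hpart; rw [hya] at this; simpa using this
      subst hn_eq
      have hnS : n ∈ S := (hτ (n, r) List.mem_cons_self).1
      have hrtg := hinv hnS
      obtain ⟨u, hu⟩ := (hτ (n, r) List.mem_cons_self).2 a hpart
      have hx'a : x' a = {u} := by rw [hx' a, if_pos hpart, hu]
      have hinv' : u ∈ S → ReflTransGen (fun u v => N.Edge u v ∧ u ∈ S ∧ v ∈ S) st u :=
        fun huS => hrtg.tail ⟨⟨hnatoms, a, hpart, r, hrout, hu ▸ Finset.mem_singleton_self u⟩,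
          hnS, huS⟩
      rcases List.mem_cons.mp hp with rfl | hp'
      · exact hrtg
      · exact ih hτtail a u hx'a hinv' p hp' hap
    · have hx'a : x' a = {m0} := by rw [hx' a, if_neg hpart, hya]
      rcases List.mem_cons.mp hp with rfl | hp'
      · exact absurd hap hpart
      · exact ih hτtail a m0 hx'a hinv p hp' hap

lemma loop_closure {N : Negotiation A ν ρ Q} (hD : N.Deterministic)
    {x : A → Finset ν} {σ : List (ν × ρ)} (hocc : N.Occ x σ x)
    {m m' : ν} {rm r' : ρ} {a : A}
    (hm : (m, rm) ∈ σ) (hm' : (m', r') ∈ σ)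
    (ha' : a ∈ N.parties m') (ha : a ∈ N.parties m) :
    Relation.ReflTransGen
      (fun u v => N.Edge u v ∧ u ∈ atomsOf σ ∧ v ∈ atomsOf σ) m' m := by
  classical
  set S := atomsOf σ with hSdef
  have hτall : ∀ p ∈ σ, p.1 ∈ S ∧ ∀ b ∈ N.parties p.1, ∃ u, N.trans p.1 b p.2 = {u} := by
    intro p hp
    refine ⟨mem_atomsOf'.mpr ⟨p.2, by simpa using hp⟩, fun b hb => ?_⟩
    exact loop_singleton_trans hD hocc (by simpa using hp) hb
  by_cases hmm : m = m'
  · exact hmm ▸ ReflTransGen.refl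
  obtain ⟨s, t, hst⟩ := List.append_of_mem hm'
  obtain ⟨y, hys, hyt⟩ := occ_split (hst ▸ hocc)
  cases hyt with
  | @cons _ _ _ y₁ _ _ hs ht =>
    obtain ⟨⟨hmem', hen'⟩, hr', hx'⟩ := hs
    have hττ : N.Occ y₁ (t ++ s) y := occ_append ht hys
    obtain ⟨u, hu⟩ := (hτall (m', r') hm').2 a ha'
    have hy₁a : y₁ a = {u} := by rw [hx' a, if_pos ha', hu]
    have hm'S : m' ∈ S := mem_atomsOf'.mpr ⟨r', hm'⟩
    have hinv : u ∈ S → Relation.ReflTransGen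
        (fun u v => N.Edge u v ∧ u ∈ S ∧ v ∈ S) m' u :=
      fun huS => ReflTransGen.single
        ⟨⟨hmem', a, ha', r', hr', hu ▸ Finset.mem_singleton_self u⟩, hm'S, huS⟩
    have hmem_ts : (m, rm) ∈ t ++ s := by
      rw [hst] at hm
      rcases List.mem_append.mp hm with h1 | h2
      · exact List.mem_append.mpr (Or.inr h1)
      · rcases List.mem_cons.mp h2 with heq | h3
        · exact absurd (congrArg Prod.fst heq) hmm
        · exact List.mem_append.mpr (Or.inl h3)
    have hτall' : ∀ p ∈ t ++ s, p.1 ∈ S ∧ ∀ b ∈ N.parties p.1, ∃ u, N.trans p.1 b p.2 = {u} := by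
      intro p hp
      apply hτall
      rw [hst]
      rcases List.mem_append.mp hp with h1 | h2
      · exact List.mem_append.mpr (Or.inr (List.mem_cons_of_mem _ h1))
      · exact List.mem_append.mpr (Or.inl h2)
    exact token_chain S m' hττ hτall' a u hy₁a hinv (m, rm) hmem_ts ha

lemma occ_blend {N : Negotiation A ν ρ Q} (B : Finset A) (c : A → Finset ν) (R : Finset ν) :
    ∀ {τ : List (ν × ρ)} {y z : A → Finset ν}, N.Occ y τ z →
    (∀ p ∈ τ, (p.1 ∈ R ∧ ∀ a ∈ N.parties p.1, a ∈ B) ∨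
      (p.1 ∉ R ∧ ∀ a ∈ N.parties p.1, a ∉ B)) →
    N.Occ (fun a => if a ∈ B then y a else c a) (τ.filter (fun p => p.1 ∈ R))
      (fun a => if a ∈ B then z a else c a) := by
  intro τ y z hocc
  induction hocc with
  | nil => intro _; exact .nil _
  | @cons x n r x' l x'' hs hl ih =>
    intro hτ
    obtain ⟨⟨hnatoms, hen⟩, hrout, hx'⟩ := hs
    have ihres := ih (fun p hp => hτ p (List.mem_cons_of_mem _ hp))
    rcases hτ (n, r) List.mem_cons_self with ⟨hR, hB⟩ | ⟨hR, hB⟩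
    · rw [List.filter_cons_of_pos (by simpa using hR)]
      refine .cons ⟨⟨hnatoms, fun a hpa => ?_⟩, hrout, fun a => ?_⟩ ihres
      · dsimp only; rw [if_pos (hB a hpa)]; exact hen a hpa
      · dsimp only
        by_cases hpa : a ∈ N.parties n
        · rw [if_pos hpa, if_pos (hB a hpa), hx' a, if_pos hpa]
        · rw [if_neg hpa]
          by_cases haB : a ∈ B
          · rw [if_pos haB, if_pos haB, hx' a, if_neg hpa]
          · rw [if_neg haB, if_neg haB]
    · rw [List.filter_cons_of_neg (by simpa using hR)]
      have heq : (fun a => if a ∈ B then x' a else c a) =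
          (fun a => if a ∈ B then x a else c a) := by
        funext a
        by_cases haB : a ∈ B
        · rw [if_pos haB, if_pos haB, hx' a, if_neg (fun hpa => hB a hpa haB)]
        · rw [if_neg haB, if_neg haB]
      rw [heq] at ihres
      exact ihres

end AuxLemmas


/-- The set of atoms of a minimal loop of an SDN induces a strongly connected
subgraph of the graph of the negotiation. -/
theorem minimal_loop_strongly_connected (N : Negotiation A ν ρ Q)
    (hS : N.Sound) (hD : N.Deterministic) (σ : List (ν × ρ)) (hmin : N.IsMinimalLoop σ) :
    ∀ n ∈ atomsOf σ, ∀ n' ∈ atomsOf σ,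
      Relation.ReflTransGen
        (fun u v => N.Edge u v ∧ u ∈ atomsOf σ ∧ v ∈ atomsOf σ) n n' := by
  classical
  obtain ⟨⟨hne, x, hreach, hloop⟩, hminimal⟩ := hmin
  intro n hn n' hn'
  by_contra hcontra
  set S := atomsOf σ with hSdef
  set E' := fun u v => N.Edge u v ∧ u ∈ S ∧ v ∈ S with hE'def
  set R : Finset ν := S.filter (fun m => Relation.ReflTransGen E' n m) with hRdef
  have hRS : R ⊆ S := Finset.filter_subset _ _
  have hnR : n ∈ R := Finset.mem_filter.mpr ⟨hn, Relation.ReflTransGen.refl⟩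
  have hn'R : n' ∉ R := fun h => hcontra (Finset.mem_filter.mp h).2
  set B : Finset A := R.biUnion N.parties with hBdef
  -- dichotomy
  have hdich : ∀ p ∈ σ, (p.1 ∈ R ∧ ∀ a ∈ N.parties p.1, a ∈ B) ∨
      (p.1 ∉ R ∧ ∀ a ∈ N.parties p.1, a ∉ B) := by
    intro p hp
    by_cases hpR : p.1 ∈ R
    · exact Or.inl ⟨hpR, fun a hpa => Finset.mem_biUnion.mpr ⟨p.1, hpR, hpa⟩⟩
    · refine Or.inr ⟨hpR, fun a hpa haB => ?_⟩
      obtain ⟨m', hm'R, ham'⟩ := Finset.mem_biUnion.mp haB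
      obtain ⟨hm'S, hm'rtg⟩ := Finset.mem_filter.mp hm'R
      obtain ⟨r', hm'σ⟩ := mem_atomsOf'.mp hm'S
      have hclose := loop_closure hD hloop (m := p.1) (rm := p.2) (by simpa using hp)
        hm'σ ham' hpa
      have hp1S : p.1 ∈ S := mem_atomsOf'.mpr ⟨p.2, by simpa using hp⟩
      exact hpR (Finset.mem_filter.mpr ⟨hp1S, hm'rtg.trans hclose⟩)
  -- the projected loop
  have hblend := occ_blend B x R hloop hdich
  have hxeq : (fun a => if a ∈ B then x a else x a) = x := by
    funext a; exact ite_self _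
  rw [hxeq] at hblend
  set σ' := σ.filter (fun p => p.1 ∈ R) with hσ'def
  obtain ⟨rn, hnσ⟩ := mem_atomsOf'.mp hn
  have hmemσ' : (n, rn) ∈ σ' := List.mem_filter.mpr ⟨hnσ, by simpa using hnR⟩
  have hloop' : N.IsLoop σ' := ⟨List.ne_nil_of_mem hmemσ', x, hreach, hblend⟩
  refine hminimal σ' hloop' ⟨?_, ?_⟩
  · intro m hm
    obtain ⟨r, hr⟩ := mem_atomsOf'.mp hm
    have := List.mem_filter.mp hr
    exact hRS (by simpa using this.2)
  · intro hsub
    apply hn'R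
    have hn'σ' := hsub hn'
    obtain ⟨r, hr⟩ := mem_atomsOf'.mp hn'σ'
    have := List.mem_filter.mp hr
    simpa using this.2
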